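/- Let H be a real separable Hilbert space, I=[0,T] with T>0, γ ≥ 0 and L ≥ 0. Let ζ : I → H be γ-Lipschitz with ‖ζ(t)‖ = 1 for all t ∈ I, and let β : I × H → ℝ satisfy |β(s,x) − β(t,y)| ≤ γ|t−s| + L‖x−y‖ for all s,t ∈ I and x,y ∈ H. Define the moving half-spaces C(t,x) := {z ∈ H : ⟨ζ(t), z⟩ ≤ β(t,x)}. Then for every r > 0, all s,t ∈ I and all x,y ∈ H, ĥaus_r(C(s,x), C(t,y)) = sup_{z∈r𝔹} |d(z, C(s,x)) − d(z, C(t,y))| ≤ γ(r+1)|t−s| + L‖x−y‖. In particular, C is Lipschitz with respect to the truncated Hausdorff distance. -/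

import Mathlib

open Metric Set

noncomputable section

variable {H : Type} [NormedAddCommGroup H] [InnerProductSpace ℝ H]

/-- The `r`-truncated excess of `A` over `B`: `sup_{x ∈ A ∩ r𝔹} d(x,B)`
(with `sup ∅ = 0`). -/
def excTr (r : ℝ) (A B : Set H) : ℝ :=
  sSup ((fun x => infDist x B) '' (A ∩ closedBall (0:H) r))

/-- The `r`-truncated Hausdorff distance. -/
def hausTr (r : ℝ) (A B : Set H) : ℝ :=
  max (excTr r A B) (excTr r B A)

/-- The quantity `ĥaus_r(A,B) = sup_{z ∈ r𝔹} |d(z,A) − d(z,B)|`. -/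
def hhausTr (r : ℝ) (A B : Set H) : ℝ :=
  sSup ((fun z => |infDist z A - infDist z B|) '' closedBall (0:H) r)


lemma infDist_halfspace {H : Type} [NormedAddCommGroup H] [InnerProductSpace ℝ H]
    (ζ : H) (hζ : ‖ζ‖ = 1) (c : ℝ) (z : H) :
    infDist z {w : H | (inner ℝ ζ w : ℝ) ≤ c} = max ((inner ℝ ζ z : ℝ) - c) 0 := by
  set m : ℝ := max ((inner ℝ ζ z : ℝ) - c) 0 with hm
  have hm0 : 0 ≤ m := le_max_right _ _
  set w₀ : H := z - m • ζ with hw₀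
  have hw₀mem : w₀ ∈ {w : H | (inner ℝ ζ w : ℝ) ≤ c} := by
    simp only [hw₀, mem_setOf_eq, inner_sub_right, inner_smul_right,
      real_inner_self_eq_norm_sq, hζ]
    rcases le_or_gt ((inner ℝ ζ z : ℝ) - c) 0 with h | h
    · have : m = 0 := max_eq_right h
      rw [this]; linarith
    · have : m = (inner ℝ ζ z : ℝ) - c := max_eq_left h.le
      rw [this]; ring_nf; nlinarith
  have hne : {w : H | (inner ℝ ζ w : ℝ) ≤ c}.Nonempty := ⟨w₀, hw₀mem⟩
  apply le_antisymm
  · calc infDist z {w : H | (inner ℝ ζ w : ℝ) ≤ c} ≤ dist z w₀ := infDist_le_dist_of_mem hw₀mem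
      _ = m := by
        rw [dist_eq_norm, hw₀]
        simp [norm_smul, hζ, abs_of_nonneg hm0]
  · by_contra hc
    push_neg at hc
    obtain ⟨w, hw, hwd⟩ := (infDist_lt_iff hne).1 hc
    have hle : m ≤ dist z w := by
      rw [hm]
      refine max_le ?_ dist_nonneg
      have h1 : (inner ℝ ζ (z - w) : ℝ) ≤ ‖z - w‖ := by
        calc (inner ℝ ζ (z - w) : ℝ) ≤ ‖ζ‖ * ‖z - w‖ := real_inner_le_norm _ _
          _ = ‖z - w‖ := by rw [hζ, one_mul]
      have h2 : (inner ℝ ζ w : ℝ) ≤ c := hw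
      rw [inner_sub_right] at h1
      rw [dist_eq_norm]
      linarith
    exact absurd hwd (not_lt.2 hle)


/-- The moving half-space example: `C(t,x) = {z : ⟨ζ(t), z⟩ ≤ β(t,x)}` is Lipschitz
with respect to the truncated Hausdorff distance. -/
theorem halfspace_truncated_hausdorff_lipschitz
    {H : Type} [NormedAddCommGroup H] [InnerProductSpace ℝ H] [CompleteSpace H]
    [TopologicalSpace.SeparableSpace H]
    (T : ℝ) (hT : 0 < T) (γ L : ℝ) (hγ : 0 ≤ γ) (hL : 0 ≤ L)
    (ζ : ℝ → H)
    (hζlip : ∀ s ∈ Icc (0:ℝ) T, ∀ t ∈ Icc (0:ℝ) T, ‖ζ t - ζ s‖ ≤ γ * |t - s|)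
    (hζnorm : ∀ t ∈ Icc (0:ℝ) T, ‖ζ t‖ = 1)
    (b : ℝ → H → ℝ)
    (hb : ∀ s ∈ Icc (0:ℝ) T, ∀ t ∈ Icc (0:ℝ) T, ∀ x y : H,
      |b s x - b t y| ≤ γ * |t - s| + L * ‖x - y‖) :
    ∀ r : ℝ, 0 < r → ∀ s ∈ Icc (0:ℝ) T, ∀ t ∈ Icc (0:ℝ) T, ∀ x y : H,
      hhausTr r ({z : H | (inner ℝ (ζ s) z : ℝ) ≤ b s x})
        ({z : H | (inner ℝ (ζ t) z : ℝ) ≤ b t y})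
        ≤ γ * (r + 1) * |t - s| + L * ‖x - y‖ := by
  intro r hr s hs t ht x y
  have hrhs0 : 0 ≤ γ * (r + 1) * |t - s| + L * ‖x - y‖ := by
    have := abs_nonneg (t - s); have := norm_nonneg (x - y); positivity
  refine Real.sSup_le ?_ hrhs0
  rintro v ⟨z, hz, rfl⟩
  dsimp only
  rw [infDist_halfspace _ (hζnorm s hs), infDist_halfspace _ (hζnorm t ht)]
  have key : |((inner ℝ (ζ s) z : ℝ) - b s x) - ((inner ℝ (ζ t) z : ℝ) - b t y)|
      ≤ γ * (r + 1) * |t - s| + L * ‖x - y‖ := by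
    have h1 : |(inner ℝ (ζ s) z : ℝ) - (inner ℝ (ζ t) z : ℝ)| ≤ γ * |t - s| * r := by
      have : (inner ℝ (ζ s) z : ℝ) - (inner ℝ (ζ t) z : ℝ) = inner ℝ (ζ s - ζ t) z := by
        rw [inner_sub_left]
      rw [this]
      calc |(inner ℝ (ζ s - ζ t) z : ℝ)| ≤ ‖ζ s - ζ t‖ * ‖z‖ := abs_real_inner_le_norm _ _
        _ ≤ (γ * |s - t|) * r := by
            apply mul_le_mul (hζlip t ht s hs) _ (norm_nonneg _)
              (by positivity)
            · simpa [dist_eq_norm] using mem_closedBall_iff_norm.1 hz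
        _ = γ * |t - s| * r := by rw [abs_sub_comm]
    have h2 : |b t y - b s x| ≤ γ * |t - s| + L * ‖x - y‖ := by
      have := hb t ht s hs y x
      rwa [abs_sub_comm s t, norm_sub_rev] at this
    calc |((inner ℝ (ζ s) z : ℝ) - b s x) - ((inner ℝ (ζ t) z : ℝ) - b t y)|
        ≤ |(inner ℝ (ζ s) z : ℝ) - (inner ℝ (ζ t) z : ℝ)| + |b t y - b s x| := by
          rw [show ((inner ℝ (ζ s) z : ℝ) - b s x) - ((inner ℝ (ζ t) z : ℝ) - b t y)
            = ((inner ℝ (ζ s) z : ℝ) - (inner ℝ (ζ t) z : ℝ)) + (b t y - b s x) by ring]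
          exact abs_add_le _ _
      _ ≤ γ * |t - s| * r + (γ * |t - s| + L * ‖x - y‖) := add_le_add h1 h2
      _ = γ * (r + 1) * |t - s| + L * ‖x - y‖ := by ring
  calc |max ((inner ℝ (ζ s) z : ℝ) - b s x) 0 - max ((inner ℝ (ζ t) z : ℝ) - b t y) 0|
      ≤ |((inner ℝ (ζ s) z : ℝ) - b s x) - ((inner ℝ (ζ t) z : ℝ) - b t y)| :=
        abs_max_sub_max_le_abs _ _ _
    _ ≤ _ := key

end
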